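/- arXiv:1607.05430 — 3 statements merged into one kernel-verified Lean document; each statement's English description precedes it below -/
import Mathlib

section
/- Under Assumptions (A1), (A2), (A3) and (A4), the semiparametric efficient Fisher information matrix J̃ is nonsingular. -/
open MeasureTheory Filter Finset Matrix

noncomputable section

namespace SemiMix

/-- The unit cube `[0,1]³`. -/
def cube : Set (Fin 3 → ℝ) := Set.univ.pi fun _ => Set.Icc (0:ℝ) 1

/-- The unit interval `[0,1]`. -/
def unitInt : Set ℝ := Set.Icc (0:ℝ) 1

/-- Mixture density `g_{θ,f}` with `k+1` populations. -/
def gmix (k : ℕ) (θ : Fin (k+1) → ℝ) (f : Fin (k+1) → Fin 3 → ℝ → ℝ)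
    (x : Fin 3 → ℝ) : ℝ :=
  ∑ j, θ j * ∏ c, f j c (x c)

/-- Expectation `E*[φ(X)]` under the true law. -/
def Estar (k : ℕ) (θ : Fin (k+1) → ℝ) (f : Fin (k+1) → Fin 3 → ℝ → ℝ)
    (φ : (Fin 3 → ℝ) → ℝ) : ℝ :=
  ∫ x in cube, φ x * gmix k θ f x

/-- Length `|I_m|` of a bin. -/
def len {M : ℕ} (I : Fin (M+1) → Set ℝ) (m : Fin (M+1)) : ℝ := (volume (I m)).toReal

/-- Step density `f_ω` on the partition `I` with bin weights `w`. -/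
def stepFun {M : ℕ} (I : Fin (M+1) → Set ℝ) (w : Fin (M+1) → ℝ) (u : ℝ) : ℝ :=
  ∑ m, (w m / len I m) * (I m).indicator 1 u

/-- Bin masses `ω*` of a density `f`. -/
def wstar {M : ℕ} (I : Fin (M+1) → Set ℝ) (f : ℝ → ℝ) (m : Fin (M+1)) : ℝ :=
  ∫ u in I m, f u

/-- Approximate model density `g_{θ,ω;M}`. -/
def gapp (k M : ℕ) (I : Fin (M+1) → Set ℝ) (θ : Fin (k+1) → ℝ)
    (ω : Fin (k+1) → Fin 3 → Fin (M+1) → ℝ) (x : Fin 3 → ℝ) : ℝ :=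
  ∑ j, θ j * ∏ c, stepFun I (ω j c) (x c)

/-- Histogram approximation `f_{ω*}` of a density `f` on the partition `I`. -/
def fM {M : ℕ} (I : Fin (M+1) → Set ℝ) (f : ℝ → ℝ) : ℝ → ℝ :=
  stepFun I (wstar I f)

/-- Model density `g_{θ*,ω*_M;M}` at the true binned parameters. -/
def gstarM (k M : ℕ) (I : Fin (M+1) → Set ℝ) (θ : Fin (k+1) → ℝ)
    (f : Fin (k+1) → Fin 3 → ℝ → ℝ) (x : Fin 3 → ℝ) : ℝ :=
  gapp k M I θ (fun j c => wstar I (f j c)) x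

/-- θ-score `(S*_{θ,M})_j` in the approximation model. -/
def scoreθ (k M : ℕ) (I : Fin (M+1) → Set ℝ) (θ : Fin (k+1) → ℝ)
    (f : Fin (k+1) → Fin 3 → ℝ → ℝ) (j : Fin k) (x : Fin 3 → ℝ) : ℝ :=
  (∏ c, fM I (f j.castSucc c) (x c) - ∏ c, fM I (f (Fin.last k) c) (x c))
    / gstarM k M I θ f x

/-- ω-score `(S*_{ω,M})_{j,c,m}` in the approximation model. -/
def scoreω (k M : ℕ) (I : Fin (M+1) → Set ℝ) (θ : Fin (k+1) → ℝ)
    (f : Fin (k+1) → Fin 3 → ℝ → ℝ) (j : Fin (k+1)) (c : Fin 3) (m : Fin M)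
    (x : Fin 3 → ℝ) : ℝ :=
  θ j * ((I m.castSucc).indicator 1 (x c) / len I m.castSucc
      - (I (Fin.last M)).indicator 1 (x c) / len I (Fin.last M))
    * (∏ c' ∈ Finset.univ.erase c, fM I (f j c') (x c'))
    / gstarM k M I θ f x

/-- Index set for the nuisance coordinates of the score vector. -/
abbrev ωIdx (k M : ℕ) := Fin (k+1) × Fin 3 × Fin M

/-- Full score vector `S*_M = (S*_{θ,M}, S*_{ω,M})`. -/
def score (k M : ℕ) (I : Fin (M+1) → Set ℝ) (θ : Fin (k+1) → ℝ)
    (f : Fin (k+1) → Fin 3 → ℝ → ℝ) : Fin k ⊕ ωIdx k M → (Fin 3 → ℝ) → ℝ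
  | Sum.inl j => scoreθ k M I θ f j
  | Sum.inr (j, c, m) => scoreω k M I θ f j c m

/-- Fisher information `J_M = E*[S*_M S*_Mᵀ]`. -/
def JM (k M : ℕ) (I : Fin (M+1) → Set ℝ) (θ : Fin (k+1) → ℝ)
    (f : Fin (k+1) → Fin 3 → ℝ → ℝ) :
    Matrix (Fin k ⊕ ωIdx k M) (Fin k ⊕ ωIdx k M) ℝ :=
  fun a b => Estar k θ f fun x => score k M I θ f a x * score k M I θ f b x

/-- θθ-block of the Fisher information. -/
def Jθθ (k M : ℕ) (I : Fin (M+1) → Set ℝ) (θ : Fin (k+1) → ℝ)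
    (f : Fin (k+1) → Fin 3 → ℝ → ℝ) : Matrix (Fin k) (Fin k) ℝ :=
  fun a b => JM k M I θ f (Sum.inl a) (Sum.inl b)

/-- θω-block of the Fisher information. -/
def Jθω (k M : ℕ) (I : Fin (M+1) → Set ℝ) (θ : Fin (k+1) → ℝ)
    (f : Fin (k+1) → Fin 3 → ℝ → ℝ) : Matrix (Fin k) (ωIdx k M) ℝ :=
  fun a b => JM k M I θ f (Sum.inl a) (Sum.inr b)

/-- ωω-block of the Fisher information. -/
def Jωω (k M : ℕ) (I : Fin (M+1) → Set ℝ) (θ : Fin (k+1) → ℝ)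
    (f : Fin (k+1) → Fin 3 → ℝ → ℝ) : Matrix (ωIdx k M) (ωIdx k M) ℝ :=
  fun a b => JM k M I θ f (Sum.inr a) (Sum.inr b)

/-- Efficient Fisher information `J̃_M` for `θ` in the approximation model
(Schur complement of the ωω-block). -/
def effFisherM (k M : ℕ) (I : Fin (M+1) → Set ℝ) (θ : Fin (k+1) → ℝ)
    (f : Fin (k+1) → Fin 3 → ℝ → ℝ) : Matrix (Fin k) (Fin k) ℝ :=
  Jθθ k M I θ f - Jθω k M I θ f * (Jωω k M I θ f)⁻¹ * (Jθω k M I θ f)ᵀ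

/-- Efficient score function `ψ̃_M` for `θ` in the approximation model. -/
def effScoreM (k M : ℕ) (I : Fin (M+1) → Set ℝ) (θ : Fin (k+1) → ℝ)
    (f : Fin (k+1) → Fin 3 → ℝ → ℝ) (j : Fin k) (x : Fin 3 → ℝ) : ℝ :=
  scoreθ k M I θ f j x
    - ∑ b : ωIdx k M, (Jθω k M I θ f * (Jωω k M I θ f)⁻¹) j b
        * score k M I θ f (Sum.inr b) x

/-- `I` is a Borel partition of `[0,1]`. -/
def IsPartition {M : ℕ} (I : Fin (M+1) → Set ℝ) : Prop :=
  (∀ m, MeasurableSet (I m)) ∧ (Pairwise fun m m' => Disjoint (I m) (I m'))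
    ∧ (⋃ m, I m) = unitInt

/-- `f` is a family of probability densities on `[0,1]`. -/
def IsDensityFamily (k : ℕ) (f : Fin (k+1) → Fin 3 → ℝ → ℝ) : Prop :=
  ∀ j c, Measurable (f j c) ∧ (∀ u, 0 ≤ f j c u) ∧ ∫ u in unitInt, f j c u = 1

/-- `I₁` is a coarser partition than `I₂`. -/
def Coarser {M₁ M₂ : ℕ} (I₁ : Fin (M₁+1) → Set ℝ) (I₂ : Fin (M₂+1) → Set ℝ) : Prop :=
  ∀ m₁, ∃ S : Set (Fin (M₂+1)), I₁ m₁ = ⋃ m₂ ∈ S, I₂ m₂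

end SemiMix

namespace SemiMix

/-- The true law `P*` of one observation (density `g_{θ*,f*}` on the cube). -/
def μstar (k : ℕ) (θ : Fin (k+1) → ℝ) (f : Fin (k+1) → Fin 3 → ℝ → ℝ) :
    Measure (Fin 3 → ℝ) :=
  (volume.restrict cube).withDensity fun x => ENNReal.ofReal (gmix k θ f x)

/-- The measure `f(u) du` on `[0,1]` associated with an emission density. -/
def emissionMeasure (f : ℝ → ℝ) : Measure ℝ :=
  (volume.restrict unitInt).withDensity fun u => ENNReal.ofReal (f u)

/-- The tangent set `𝓟̇` for the nuisance parameter, inside `L²(g_{θ*,f*}dx)`: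
the functions `x ↦ h(x_c) ∏_{c'} f*_{j,c'}(x_{c'}) / g_{θ*,f*}(x)` with
`h ∈ L²(f*_{j,c}dx)` and `∫ h f*_{j,c} dx = 0`. -/
def tangentSet (k : ℕ) (θ : Fin (k+1) → ℝ) (f : Fin (k+1) → Fin 3 → ℝ → ℝ) :
    Set (Lp ℝ 2 (μstar k θ f)) :=
  {F | ∃ (j : Fin (k+1)) (c : Fin 3) (h : ℝ → ℝ),
    MemLp h 2 (emissionMeasure (f j c)) ∧ (∫ u in unitInt, h u * f j c u) = 0 ∧
    (F : (Fin 3 → ℝ) → ℝ) =ᵐ[μstar k θ f]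
      fun x => h (x c) * (∏ c', f j c' (x c')) / gmix k θ f x}

/-- The closed linear span of the tangent set. -/
def Pdot (k : ℕ) (θ : Fin (k+1) → ℝ) (f : Fin (k+1) → Fin 3 → ℝ → ℝ) :
    Submodule ℝ (Lp ℝ 2 (μstar k θ f)) :=
  (Submodule.span ℝ (tangentSet k θ f)).topologicalClosure

/-- The orthogonal projection `𝔸` onto the closure of the span of the tangent
set in `L²(g_{θ*,f*}dx)`. -/
def projA (k : ℕ) (θ : Fin (k+1) → ℝ) (f : Fin (k+1) → Fin 3 → ℝ → ℝ) :
    Lp ℝ 2 (μstar k θ f) →L[ℝ] ↥(Pdot k θ f) :=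
  haveI : CompleteSpace ↥(Pdot k θ f) :=
    IsComplete.completeSpace_coe (Submodule.isClosed_topologicalClosure _).isComplete
  Submodule.orthogonalProjectionOnto (Pdot k θ f)

/-- Semiparametric θ-score `(S*_θ)_j`. -/
def Sθstar (k : ℕ) (θ : Fin (k+1) → ℝ) (f : Fin (k+1) → Fin 3 → ℝ → ℝ)
    (j : Fin k) (x : Fin 3 → ℝ) : ℝ :=
  (∏ c, f j.castSucc c (x c) - ∏ c, f (Fin.last k) c (x c)) / gmix k θ f x

open Classical in
/-- The θ-score as an element of `L²(g_{θ*,f*}dx)`. -/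
def SθstarLp (k : ℕ) (θ : Fin (k+1) → ℝ) (f : Fin (k+1) → Fin 3 → ℝ → ℝ)
    (j : Fin k) : Lp ℝ 2 (μstar k θ f) :=
  if h : MemLp (Sθstar k θ f j) 2 (μstar k θ f) then h.toLp _ else 0

/-- The semiparametric efficient score `ψ̃_j = (S*_θ)_j - 𝔸 (S*_θ)_j` as an
element of `L²(g_{θ*,f*}dx)`. -/
def effScore (k : ℕ) (θ : Fin (k+1) → ℝ) (f : Fin (k+1) → Fin 3 → ℝ → ℝ)
    (j : Fin k) : Lp ℝ 2 (μstar k θ f) :=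
  SθstarLp k θ f j - ((projA k θ f (SθstarLp k θ f j) : ↥(Pdot k θ f)) : Lp ℝ 2 (μstar k θ f))

/-- A representative of the semiparametric efficient score `ψ̃_j`. -/
def effScoreFun (k : ℕ) (θ : Fin (k+1) → ℝ) (f : Fin (k+1) → Fin 3 → ℝ → ℝ)
    (j : Fin k) : (Fin 3 → ℝ) → ℝ :=
  ⇑(effScore k θ f j)

/-- The semiparametric efficient Fisher information `J̃ = E*[ψ̃ ψ̃ᵀ]`. -/
def Jtilde (k : ℕ) (θ : Fin (k+1) → ℝ) (f : Fin (k+1) → Fin 3 → ℝ → ℝ) :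
    Matrix (Fin k) (Fin k) ℝ :=
  fun j j' => ∫ x, effScoreFun k θ f j x * effScoreFun k θ f j' x ∂(μstar k θ f)

end SemiMix


namespace SemiMixAux
open SemiMix

lemma measurableSet_unitInt : MeasurableSet unitInt := measurableSet_Icc
lemma measurableSet_cube : MeasurableSet cube :=
  MeasurableSet.univ_pi fun _ => measurableSet_Icc

lemma volume_unitInt : volume unitInt = 1 := by
  simp [unitInt]

lemma integral_one_unitInt : ∫ _ in unitInt, (1:ℝ) = 1 := by
  simp [unitInt]

/-- Fubini for the cube: integral of a product of coordinate functions. -/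
lemma cube_integral_prod (φ : Fin 3 → ℝ → ℝ) :
    ∫ x in cube, ∏ i, φ i (x i) = ∏ i, ∫ u in unitInt, φ i u := by
  have h1 : ∀ i : Fin 3, ∫ u in unitInt, φ i u
      = ∫ u, unitInt.indicator (φ i) u := by
    intro i; rw [integral_indicator measurableSet_unitInt]
  have h2 : ∫ x in cube, ∏ i, φ i (x i)
      = ∫ x : Fin 3 → ℝ, cube.indicator (fun x => ∏ i, φ i (x i)) x := by
    rw [integral_indicator measurableSet_cube]
  rw [h2]
  have h3 : cube.indicator (fun x : Fin 3 → ℝ => ∏ i, φ i (x i))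
      = fun x => ∏ i, unitInt.indicator (φ i) (x i) := by
    funext x
    by_cases hx : x ∈ cube
    · rw [Set.indicator_of_mem hx]
      have : ∀ i, x i ∈ unitInt := by
        intro i; exact hx i (Set.mem_univ i)
      exact (Finset.prod_congr rfl fun i _ => (Set.indicator_of_mem (this i) _).symm)
    · rw [Set.indicator_of_notMem hx]
      obtain ⟨i, hi⟩ : ∃ i, x i ∉ unitInt := by
        by_contra h; push_neg at h
        exact hx fun i _ => h i
      exact (Finset.prod_eq_zero (Finset.mem_univ i)
        (by rw [Set.indicator_of_notMem hi])).symm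
  rw [h3, MeasureTheory.integral_fintype_prod_volume_eq_prod (f := fun i => unitInt.indicator (φ i))]
  exact Finset.prod_congr rfl fun i _ => (h1 i).symm

lemma cube_integrable_prod (φ : Fin 3 → ℝ → ℝ)
    (h : ∀ i, Integrable (φ i) (volume.restrict unitInt)) :
    Integrable (fun x => ∏ i, φ i (x i)) (volume.restrict cube) := by
  suffices h' : Integrable (cube.indicator fun x : Fin 3 → ℝ => ∏ i, φ i (x i)) volume by
    exact (integrable_indicator_iff measurableSet_cube).1 h'
  have h3 : cube.indicator (fun x : Fin 3 → ℝ => ∏ i, φ i (x i))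
      = fun x => ∏ i, unitInt.indicator (φ i) (x i) := by
    funext x
    by_cases hx : x ∈ cube
    · rw [Set.indicator_of_mem hx]
      have : ∀ i, x i ∈ unitInt := fun i => hx i (Set.mem_univ i)
      exact (Finset.prod_congr rfl fun i _ => (Set.indicator_of_mem (this i) _).symm)
    · rw [Set.indicator_of_notMem hx]
      obtain ⟨i, hi⟩ : ∃ i, x i ∉ unitInt := by
        by_contra h; push_neg at h
        exact hx fun i _ => h i
      exact (Finset.prod_eq_zero (Finset.mem_univ i)
        (by rw [Set.indicator_of_notMem hi])).symm
  rw [h3]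
  exact MeasureTheory.Integrable.fintype_prod (f := fun i => unitInt.indicator (φ i))
    fun i => (integrable_indicator_iff measurableSet_unitInt).2 (h i)


end SemiMixAux

namespace SemiMixAux
open SemiMix

lemma cube_int3 (φ₀ φ₁ φ₂ : ℝ → ℝ) :
    ∫ x in cube, φ₀ (x 0) * φ₁ (x 1) * φ₂ (x 2)
      = (∫ u in unitInt, φ₀ u) * (∫ u in unitInt, φ₁ u) * (∫ u in unitInt, φ₂ u) := by
  have := cube_integral_prod ![φ₀, φ₁, φ₂]
  simpa [Fin.prod_univ_three] using this

lemma cube_intble3 {φ₀ φ₁ φ₂ : ℝ → ℝ}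
    (h₀ : Integrable φ₀ (volume.restrict unitInt))
    (h₁ : Integrable φ₁ (volume.restrict unitInt))
    (h₂ : Integrable φ₂ (volume.restrict unitInt)) :
    Integrable (fun x : Fin 3 → ℝ => φ₀ (x 0) * φ₁ (x 1) * φ₂ (x 2))
      (volume.restrict cube) := by
  have := cube_integrable_prod ![φ₀, φ₁, φ₂] (by
    intro i; fin_cases i <;> simpa)
  simpa [Fin.prod_univ_three] using this

end SemiMixAux

namespace SemiMixAux
open SemiMix

lemma key_integral (u v w ψ₀ ψ₁ ψ₂ : ℝ → ℝ)
    (hu : Measurable u) (hub : ∃ C, ∀ t, |u t| ≤ C)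
    (hv : Measurable v) (hvb : ∃ C, ∀ t, |v t| ≤ C)
    (hw : Measurable w) (hwb : ∃ C, ∀ t, |w t| ≤ C)
    (h₀ : Integrable ψ₀ (volume.restrict unitInt))
    (h₁ : Integrable ψ₁ (volume.restrict unitInt))
    (h₂ : Integrable ψ₂ (volume.restrict unitInt)) :
    ∫ x in cube,
      (u (x 0) * v (x 1) * w (x 2) - (1/2)*(u (x 0)*v (x 1))
        - (1/2)*(u (x 0)*w (x 2)) - (1/2)*(v (x 1)*w (x 2)))
      * (ψ₀ (x 0) * ψ₁ (x 1) * ψ₂ (x 2))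
    = (∫ t in unitInt, u t * ψ₀ t) * (∫ t in unitInt, v t * ψ₁ t) * (∫ t in unitInt, w t * ψ₂ t)
      - (1/2) * ((∫ t in unitInt, u t * ψ₀ t) * (∫ t in unitInt, v t * ψ₁ t) * (∫ t in unitInt, ψ₂ t))
      - (1/2) * ((∫ t in unitInt, u t * ψ₀ t) * (∫ t in unitInt, ψ₁ t) * (∫ t in unitInt, w t * ψ₂ t))
      - (1/2) * ((∫ t in unitInt, ψ₀ t) * (∫ t in unitInt, v t * ψ₁ t) * (∫ t in unitInt, w t * ψ₂ t)) := by
  have hu0 : Integrable (fun t => u t * ψ₀ t) (volume.restrict unitInt) :=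
    h₀.bdd_mul hu.aestronglyMeasurable (Filter.Eventually.of_forall fun t => by simpa [Real.norm_eq_abs] using hub.choose_spec t)
  have hv1 : Integrable (fun t => v t * ψ₁ t) (volume.restrict unitInt) :=
    h₁.bdd_mul hv.aestronglyMeasurable (Filter.Eventually.of_forall fun t => by simpa [Real.norm_eq_abs] using hvb.choose_spec t)
  have hw2 : Integrable (fun t => w t * ψ₂ t) (volume.restrict unitInt) :=
    h₂.bdd_mul hw.aestronglyMeasurable (Filter.Eventually.of_forall fun t => by simpa [Real.norm_eq_abs] using hwb.choose_spec t)
  have hA := cube_intble3 hu0 hv1 hw2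
  have hB := cube_intble3 hu0 hv1 h₂
  have hC := cube_intble3 hu0 h₁ hw2
  have hD := cube_intble3 h₀ hv1 hw2
  have eq1 : ∫ x in cube,
      (u (x 0) * v (x 1) * w (x 2) - (1/2)*(u (x 0)*v (x 1))
        - (1/2)*(u (x 0)*w (x 2)) - (1/2)*(v (x 1)*w (x 2)))
      * (ψ₀ (x 0) * ψ₁ (x 1) * ψ₂ (x 2))
      = ∫ x in cube,
        ((u (x 0) * ψ₀ (x 0)) * (v (x 1) * ψ₁ (x 1)) * (w (x 2) * ψ₂ (x 2))
          - (1/2) * ((u (x 0) * ψ₀ (x 0)) * (v (x 1) * ψ₁ (x 1)) * ψ₂ (x 2))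
          - (1/2) * ((u (x 0) * ψ₀ (x 0)) * ψ₁ (x 1) * (w (x 2) * ψ₂ (x 2)))
          - (1/2) * (ψ₀ (x 0) * (v (x 1) * ψ₁ (x 1)) * (w (x 2) * ψ₂ (x 2)))) := by
    apply integral_congr_ae
    filter_upwards with x
    ring
  have IA := cube_int3 (fun t => u t * ψ₀ t) (fun t => v t * ψ₁ t) (fun t => w t * ψ₂ t)
  have IB := cube_int3 (fun t => u t * ψ₀ t) (fun t => v t * ψ₁ t) ψ₂
  have IC := cube_int3 (fun t => u t * ψ₀ t) ψ₁ (fun t => w t * ψ₂ t)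
  have ID := cube_int3 ψ₀ (fun t => v t * ψ₁ t) (fun t => w t * ψ₂ t)
  rw [eq1]
  have step1 :
      (∫ x : Fin 3 → ℝ in cube,
        (u (x 0) * ψ₀ (x 0) * (v (x 1) * ψ₁ (x 1)) * (w (x 2) * ψ₂ (x 2))
          - 1 / 2 * (u (x 0) * ψ₀ (x 0) * (v (x 1) * ψ₁ (x 1)) * ψ₂ (x 2))
          - 1 / 2 * (u (x 0) * ψ₀ (x 0) * ψ₁ (x 1) * (w (x 2) * ψ₂ (x 2)))
          - 1 / 2 * (ψ₀ (x 0) * (v (x 1) * ψ₁ (x 1)) * (w (x 2) * ψ₂ (x 2)))))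
      = ((∫ x : Fin 3 → ℝ in cube,
            u (x 0) * ψ₀ (x 0) * (v (x 1) * ψ₁ (x 1)) * (w (x 2) * ψ₂ (x 2)))
          - 1 / 2 * (∫ x : Fin 3 → ℝ in cube,
            u (x 0) * ψ₀ (x 0) * (v (x 1) * ψ₁ (x 1)) * ψ₂ (x 2))
          - 1 / 2 * (∫ x : Fin 3 → ℝ in cube,
            u (x 0) * ψ₀ (x 0) * ψ₁ (x 1) * (w (x 2) * ψ₂ (x 2)))
          - 1 / 2 * (∫ x : Fin 3 → ℝ in cube,
            ψ₀ (x 0) * (v (x 1) * ψ₁ (x 1)) * (w (x 2) * ψ₂ (x 2)))) := by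
    have t1 := integral_sub ((hA.sub (hB.const_mul (1/2))).sub (hC.const_mul (1/2)))
      (hD.const_mul (1/2))
    have t2 := integral_sub (hA.sub (hB.const_mul (1/2))) (hC.const_mul (1/2))
    have t3 := integral_sub hA (hB.const_mul (1/2))
    simp only [Pi.sub_apply] at t1 t2 t3
    rw [t1, t2, t3, integral_const_mul, integral_const_mul, integral_const_mul]
  rw [step1, IA, IB, IC, ID]

end SemiMixAux

namespace SemiMixAux
open SemiMix

lemma exists_moments {n : ℕ} (f : Fin (n+1) → ℝ → ℝ)
    (hint : ∀ j, Integrable (f j) (volume.restrict unitInt))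
    (hindep : ∀ α : Fin (n+1) → ℝ,
      (∀ᵐ u ∂(volume.restrict unitInt), ∑ j, α j * f j u = 0) → α = 0)
    (j₀ : Fin (n+1)) :
    ∃ u : ℝ → ℝ, Measurable u ∧ (∃ C, ∀ t, |u t| ≤ C) ∧
      ∀ j, ∫ t in unitInt, u t * f j t = if j = j₀ then 1 else 0 := by
  classical
  set S : Set (Fin (n+1) → ℝ) :=
    {y | ∃ s : Set ℝ, MeasurableSet s ∧
      y = fun j => ∫ t in unitInt, s.indicator (fun _ => (1:ℝ)) t * f j t} with hS
  have hSind : ∀ (s : Set ℝ), MeasurableSet s →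
      (fun j => ∫ t in unitInt, s.indicator (fun _ => (1:ℝ)) t * f j t) ∈ S :=
    fun s hs => ⟨s, hs, rfl⟩
  have hintind : ∀ (s : Set ℝ) (j), MeasurableSet s →
      Integrable (fun t => s.indicator (fun _ => (1:ℝ)) t * f j t)
        (volume.restrict unitInt) := by
    intro s j hs
    exact (hint j).bdd_mul ((measurable_const.indicator hs).aestronglyMeasurable)
      (c := 1) (Filter.Eventually.of_forall fun t => by
        rw [Real.norm_eq_abs]
        by_cases h : t ∈ s <;> simp [Set.indicator_of_mem, Set.indicator_of_notMem, h])
  have htop : Submodule.span ℝ S = ⊤ := by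
    by_contra hne
    obtain ⟨φ, hφ0, hφbot⟩ :=
      Submodule.exists_dual_map_eq_bot_of_lt_top (p := Submodule.span ℝ S)
        (lt_top_iff_ne_top.2 hne) inferInstance
    set α : Fin (n+1) → ℝ := fun j => φ (Pi.single j 1) with hα
    have hφy : ∀ y : Fin (n+1) → ℝ, φ y = ∑ j, y j * α j := by
      intro y
      have hy : y = ∑ j, y j • (Pi.single j (1:ℝ) : Fin (n+1) → ℝ) := by
        funext t
        simp [Pi.single_apply, Finset.sum_apply]
      conv_lhs => rw [hy]
      rw [map_sum]
      refine Finset.sum_congr rfl fun j _ => ?_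
      rw [LinearMap.map_smul]
      simp [hα, smul_eq_mul]
    have hvan : ∀ y ∈ S, φ y = 0 := by
      intro y hy
      have : φ y ∈ (Submodule.span ℝ S).map φ :=
        Submodule.mem_map_of_mem (Submodule.subset_span hy)
      rw [hφbot] at this
      simpa using this
    have hg : Integrable (fun t => ∑ j, α j * f j t) (volume.restrict unitInt) :=
      integrable_finset_sum _ fun j _ => (hint j).const_mul _
    have hzero : (fun t => ∑ j, α j * f j t) =ᵐ[volume.restrict unitInt] 0 := by
      apply ae_eq_zero_of_forall_setIntegral_eq_of_sigmaFinite
      · intro s hs _; exact hg.integrableOn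
      · intro s hs _
        have h1 : ∫ t in s, (∑ j, α j * f j t) ∂(volume.restrict unitInt)
            = ∫ t in unitInt, s.indicator (fun _ => (1:ℝ)) t * (∑ j, α j * f j t) := by
          rw [← integral_indicator hs]
          congr 1
          funext t
          by_cases h : t ∈ s <;>
            simp [Set.indicator_of_mem, Set.indicator_of_notMem, h]
        have h2 : ∫ t in unitInt, s.indicator (fun _ => (1:ℝ)) t * (∑ j, α j * f j t)
            = ∑ j, α j * ∫ t in unitInt, s.indicator (fun _ => (1:ℝ)) t * f j t := by
          rw [show (fun t => s.indicator (fun _ => (1:ℝ)) t * (∑ j, α j * f j t))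
              = fun t => ∑ j, α j * (s.indicator (fun _ => (1:ℝ)) t * f j t) by
            funext t; rw [Finset.mul_sum]; exact Finset.sum_congr rfl fun j _ => by ring]
          rw [integral_finset_sum _ fun j _ => ((hintind s j hs).const_mul _)]
          exact Finset.sum_congr rfl fun j _ => integral_const_mul _ _
        have h3 := hvan _ (hSind s hs)
        rw [hφy] at h3
        rw [h1, h2]
        rw [show ∑ j, α j * ∫ t in unitInt, s.indicator (fun _ => (1:ℝ)) t * f j t
            = ∑ j, (∫ t in unitInt, s.indicator (fun _ => (1:ℝ)) t * f j t) * α j by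
          exact Finset.sum_congr rfl fun j _ => mul_comm _ _]
        exact h3
    have : α = 0 := hindep α (by filter_upwards [hzero] with t ht using ht)
    apply hφ0
    apply LinearMap.ext
    intro y
    rw [hφy, this]
    simp
  have hmem : Pi.single j₀ (1:ℝ) ∈ Submodule.span ℝ S := htop ▸ Submodule.mem_top
  rw [Submodule.mem_span_set'] at hmem
  obtain ⟨m, c, z, hz⟩ := hmem
  choose s hs hzs using fun i => (z i).2
  refine ⟨fun t => ∑ i, c i * (s i).indicator (fun _ => (1:ℝ)) t, ?_, ?_, ?_⟩
  · exact Finset.measurable_sum _ fun i _ =>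
      (measurable_const.indicator (hs i)).const_mul _
  · refine ⟨∑ i, |c i|, fun t => ?_⟩
    refine (Finset.abs_sum_le_sum_abs _ _).trans ?_
    apply Finset.sum_le_sum
    intro i _
    rw [abs_mul]
    by_cases h : t ∈ s i <;>
      simp [Set.indicator_of_mem, Set.indicator_of_notMem, h, abs_nonneg]
  · intro j
    have h1 : (fun t => (∑ i, c i * (s i).indicator (fun _ => (1:ℝ)) t) * f j t)
        = fun t => ∑ i, c i * ((s i).indicator (fun _ => (1:ℝ)) t * f j t) := by
      funext t; rw [Finset.sum_mul]; exact Finset.sum_congr rfl fun i _ => by ring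
    rw [h1, integral_finset_sum _ fun i _ => ((hintind (s i) j (hs i)).const_mul _)]
    have h2 : ∀ i : Fin m, ∫ t in unitInt, c i * ((s i).indicator (fun _ => (1:ℝ)) t * f j t)
        = c i * ((z i : Fin (n+1) → ℝ) j) := by
      intro i
      rw [integral_const_mul]
      congr 1
      rw [hzs i]
    rw [Finset.sum_congr rfl fun i _ => h2 i]
    have := congrFun hz j
    simp only [Finset.sum_apply, Pi.smul_apply, smul_eq_mul] at this
    rw [this, Pi.single_apply]
end SemiMixAux

open SemiMix in
/-- Proposition 3 of the paper: under (A1), (A2), (A3) and (A4), the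
semiparametric efficient Fisher information matrix `J̃` is nonsingular. -/
theorem stmt_3 (k : ℕ) (hk : 1 ≤ k)
    (θstar : Fin (k+1) → ℝ) (hθsum : ∑ j, θstar j = 1)
    (fstar : Fin (k+1) → Fin 3 → ℝ → ℝ) (hf : IsDensityFamily k fstar)
    -- (A1)
    (hθpos : ∀ j, 0 < θstar j)
    (hindep : ∀ c : Fin 3, ∀ α : Fin (k+1) → ℝ,
      (∀ᵐ u ∂(volume.restrict unitInt), ∑ j, α j * fstar j c u = 0) → α = 0)
    -- the collection of partitions
    (I : (M : ℕ) → Fin (M+1) → Set ℝ) (hI : ∀ M, IsPartition (I M))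
    -- (A2)
    (hint : ∀ M m, (I M m).OrdConnected ∧ (interior (I M m)).Nonempty)
    (hmesh : ∀ ε > 0, ∃ M₀, ∀ M ≥ M₀, ∀ m, len (I M) m < ε)
    -- (A3)
    (hA3 : ∃ δ : ℝ, 0 < δ ∧
      (∀ x ∈ cube, δ ≤ gmix k θstar fstar x ∧ gmix k θstar fstar x ≤ 1/δ) ∧
      ∀ ε > 0, ∃ M₀, ∀ M ≥ M₀, ∀ x ∈ cube,
        |gstarM k M (I M) θstar fstar x - gmix k θstar fstar x| ≤ ε)
    -- (A4)
    (hA4 : ∃ Mp : ℕ → ℕ, ∀ p, Coarser (I (Mp p)) (I (Mp (p+1)))) :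
    (Jtilde k θstar fstar).det ≠ 0 := by
  intro hdet
  classical
  obtain ⟨δ, hδpos, hbound, -⟩ := hA3
  obtain ⟨a, ha0, haJ⟩ := Matrix.exists_mulVec_eq_zero_iff.2 hdet
  obtain ⟨i₀, hai₀'⟩ := Function.ne_iff.1 ha0
  have hai₀ : a i₀ ≠ 0 := by simpa using hai₀'
  set j₀ : Fin (k+1) := i₀.castSucc with hj₀
  -- basic facts
  have hfmeas : ∀ j c, Measurable (fstar j c) := fun j c => (hf j c).1
  have hfnn : ∀ j c u, 0 ≤ fstar j c u := fun j c => (hf j c).2.1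
  have hfint : ∀ j c, Integrable (fstar j c) (volume.restrict unitInt) := by
    intro j c
    by_contra hcon
    have h1 := (hf j c).2.2
    rw [MeasureTheory.integral_undef hcon] at h1
    exact one_ne_zero h1.symm
  have hgmeas : Measurable (gmix k θstar fstar) := by
    unfold gmix
    exact Finset.measurable_sum _ fun j _ => measurable_const.mul
      (Finset.measurable_prod _ fun c _ => (hfmeas j c).comp (measurable_pi_apply c))
  have hgpos : ∀ x ∈ cube, 0 < gmix k θstar fstar x :=
    fun x hx => lt_of_lt_of_le hδpos (hbound x hx).1
  have hprodle : ∀ (j : Fin (k+1)) (x : Fin 3 → ℝ),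
      θstar j * ∏ c, fstar j c (x c) ≤ gmix k θstar fstar x := by
    intro j x
    exact Finset.single_le_sum (f := fun j => θstar j * ∏ c, fstar j c (x c))
      (fun j' _ => mul_nonneg (hθpos j').le
        (Finset.prod_nonneg fun c _ => hfnn j' c _)) (Finset.mem_univ j)
  have hprodnn : ∀ (j : Fin (k+1)) (x : Fin 3 → ℝ), 0 ≤ ∏ c, fstar j c (x c) :=
    fun j x => Finset.prod_nonneg fun c _ => hfnn j c _
  haveI hMfin : IsFiniteMeasure (μstar k θstar fstar) := by
    constructor
    have h1 : μstar k θstar fstar Set.univ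
        = ∫⁻ x, ENNReal.ofReal (gmix k θstar fstar x) ∂(volume.restrict cube) := by
      simp only [μstar]
      rw [withDensity_apply _ MeasurableSet.univ, Measure.restrict_univ]
    rw [h1]
    calc ∫⁻ x, ENNReal.ofReal (gmix k θstar fstar x) ∂(volume.restrict cube)
        ≤ ∫⁻ _, ENNReal.ofReal (1/δ) ∂(volume.restrict cube) := by
          apply lintegral_mono_ae
          filter_upwards [ae_restrict_mem SemiMixAux.measurableSet_cube] with x hx
          exact ENNReal.ofReal_le_ofReal (hbound x hx).2
      _ = ENNReal.ofReal (1/δ) * volume cube := by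
          rw [lintegral_const, Measure.restrict_apply_univ]
      _ < ⊤ := by
          have hvc : volume cube = 1 := by
            rw [cube, volume_pi_pi]
            simp
          rw [hvc, mul_one]
          exact ENNReal.ofReal_lt_top
  have habs : μstar k θstar fstar ≪ volume.restrict cube :=
    MeasureTheory.withDensity_absolutelyContinuous _ _
  have hμcube : ∀ᵐ x ∂(μstar k θstar fstar), x ∈ cube :=
    habs.ae_le (ae_restrict_mem SemiMixAux.measurableSet_cube)
  -- the moment functions
  obtain ⟨u₀, hu₀m, hu₀b, hm₀⟩ := SemiMixAux.exists_moments (fun j => fstar j 0)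
    (fun j => hfint j 0) (hindep 0) j₀
  obtain ⟨u₁, hu₁m, hu₁b, hm₁⟩ := SemiMixAux.exists_moments (fun j => fstar j 1)
    (fun j => hfint j 1) (hindep 1) j₀
  obtain ⟨u₂, hu₂m, hu₂b, hm₂⟩ := SemiMixAux.exists_moments (fun j => fstar j 2)
    (fun j => hfint j 2) (hindep 2) j₀
  set F : (Fin 3 → ℝ) → ℝ := fun x =>
    u₀ (x 0) * u₁ (x 1) * u₂ (x 2) - (1/2)*(u₀ (x 0)*u₁ (x 1))
      - (1/2)*(u₀ (x 0)*u₂ (x 2)) - (1/2)*(u₁ (x 1)*u₂ (x 2)) with hFdef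
  have hFeq : ∀ x, F x = u₀ (x 0) * u₁ (x 1) * u₂ (x 2) - (1/2)*(u₀ (x 0)*u₁ (x 1))
      - (1/2)*(u₀ (x 0)*u₂ (x 2)) - (1/2)*(u₁ (x 1)*u₂ (x 2)) := fun x => rfl
  have hFmeas : Measurable F := by
    apply Measurable.sub
    apply Measurable.sub
    apply Measurable.sub
    · exact ((hu₀m.comp (measurable_pi_apply 0)).mul
        (hu₁m.comp (measurable_pi_apply 1))).mul (hu₂m.comp (measurable_pi_apply 2))
    · exact measurable_const.mul ((hu₀m.comp (measurable_pi_apply 0)).mul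
        (hu₁m.comp (measurable_pi_apply 1)))
    · exact measurable_const.mul ((hu₀m.comp (measurable_pi_apply 0)).mul
        (hu₂m.comp (measurable_pi_apply 2)))
    · exact measurable_const.mul ((hu₁m.comp (measurable_pi_apply 1)).mul
        (hu₂m.comp (measurable_pi_apply 2)))
  obtain ⟨C₀, hC₀⟩ := hu₀b
  obtain ⟨C₁, hC₁⟩ := hu₁b
  obtain ⟨C₂, hC₂⟩ := hu₂b
  have hC₀nn : 0 ≤ C₀ := le_trans (abs_nonneg _) (hC₀ 0)
  have hC₁nn : 0 ≤ C₁ := le_trans (abs_nonneg _) (hC₁ 0)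
  have hC₂nn : 0 ≤ C₂ := le_trans (abs_nonneg _) (hC₂ 0)
  have hFbd : ∀ x, |F x| ≤ C₀*C₁*C₂ + (1/2)*(C₀*C₁) + (1/2)*(C₀*C₂) + (1/2)*(C₁*C₂) := by
    intro x
    have habs2 : ∀ (s t : ℝ) (Cs Ct : ℝ), |s| ≤ Cs → |t| ≤ Ct → 0 ≤ Cs → |s*t| ≤ Cs*Ct := by
      intro s t Cs Ct hs ht hCs
      rw [abs_mul]
      exact mul_le_mul hs ht (abs_nonneg _) hCs
    have h01 : |u₀ (x 0) * u₁ (x 1)| ≤ C₀*C₁ := habs2 _ _ _ _ (hC₀ _) (hC₁ _) hC₀nn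
    have h02 : |u₀ (x 0) * u₂ (x 2)| ≤ C₀*C₂ := habs2 _ _ _ _ (hC₀ _) (hC₂ _) hC₀nn
    have h12 : |u₁ (x 1) * u₂ (x 2)| ≤ C₁*C₂ := habs2 _ _ _ _ (hC₁ _) (hC₂ _) hC₁nn
    have h012 : |u₀ (x 0) * u₁ (x 1) * u₂ (x 2)| ≤ C₀*C₁*C₂ :=
      habs2 _ _ _ _ h01 (hC₂ _) (mul_nonneg hC₀nn hC₁nn)
    have tri : ∀ s t : ℝ, |s - t| ≤ |s| + |t| := fun s t => by
      simpa [Real.norm_eq_abs] using norm_sub_le s t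
    calc |F x| ≤ |u₀ (x 0) * u₁ (x 1) * u₂ (x 2) - (1/2)*(u₀ (x 0)*u₁ (x 1))
          - (1/2)*(u₀ (x 0)*u₂ (x 2))| + |(1/2)*(u₁ (x 1)*u₂ (x 2))| := tri _ _
      _ ≤ (|u₀ (x 0) * u₁ (x 1) * u₂ (x 2) - (1/2)*(u₀ (x 0)*u₁ (x 1))|
          + |(1/2)*(u₀ (x 0)*u₂ (x 2))|) + |(1/2)*(u₁ (x 1)*u₂ (x 2))| := by
          exact add_le_add_left (tri _ _) _
      _ ≤ ((|u₀ (x 0) * u₁ (x 1) * u₂ (x 2)| + |(1/2)*(u₀ (x 0)*u₁ (x 1))|)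
          + |(1/2)*(u₀ (x 0)*u₂ (x 2))|) + |(1/2)*(u₁ (x 1)*u₂ (x 2))| := by
          exact add_le_add_left (add_le_add_left (tri _ _) _) _
      _ ≤ C₀*C₁*C₂ + (1/2)*(C₀*C₁) + (1/2)*(C₀*C₂) + (1/2)*(C₁*C₂) := by
          have e1 : |(1/2)*(u₀ (x 0)*u₁ (x 1))| ≤ (1/2)*(C₀*C₁) := by
            rw [abs_mul]; rw [show |(1:ℝ)/2| = 1/2 by norm_num]
            linarith [h01]
          have e2 : |(1/2)*(u₀ (x 0)*u₂ (x 2))| ≤ (1/2)*(C₀*C₂) := by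
            rw [abs_mul]; rw [show |(1:ℝ)/2| = 1/2 by norm_num]
            linarith [h02]
          have e3 : |(1/2)*(u₁ (x 1)*u₂ (x 2))| ≤ (1/2)*(C₁*C₂) := by
            rw [abs_mul]; rw [show |(1:ℝ)/2| = 1/2 by norm_num]
            linarith [h12]
          linarith [h012]
  have hFmem : MemLp F 2 (μstar k θstar fstar) := by
    apply MemLp.of_bound hFmeas.aestronglyMeasurable
      (C₀*C₁*C₂ + (1/2)*(C₀*C₁) + (1/2)*(C₀*C₂) + (1/2)*(C₁*C₂))
    filter_upwards with x
    simpa [Real.norm_eq_abs] using hFbd x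
  set FLp : Lp ℝ 2 (μstar k θstar fstar) := hFmem.toLp F with hFLp
  -- reduction of μstar-integrals to cube integrals
  have hμint : ∀ φ : (Fin 3 → ℝ) → ℝ,
      ∫ x, φ x ∂(μstar k θstar fstar)
        = ∫ x in cube, (gmix k θstar fstar x) * φ x := by
    intro φ
    have hrw : μstar k θstar fstar
        = (volume.restrict cube).withDensity
            (fun x => ((gmix k θstar fstar x).toNNReal : ENNReal)) := rfl
    rw [hrw, integral_withDensity_eq_integral_smul hgmeas.real_toNNReal φ]
    apply integral_congr_ae
    filter_upwards [ae_restrict_mem SemiMixAux.measurableSet_cube] with x hx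
    simp [NNReal.smul_def, Real.coe_toNNReal _ (hgpos x hx).le]
  have hinner : ∀ G : Lp ℝ 2 (μstar k θstar fstar),
      (inner ℝ FLp G : ℝ) = ∫ x, F x * G x ∂(μstar k θstar fstar) := by
    intro G
    rw [MeasureTheory.L2.inner_def]
    apply integral_congr_ae
    filter_upwards [hFmem.coeFn_toLp] with x hx
    rw [RCLike.inner_apply, conj_trivial, hFLp, hx, mul_comm]
  -- values of the key integrals against products of densities
  have hport : ∀ j : Fin (k+1),
      ∫ x in cube, F x * (fstar j 0 (x 0) * fstar j 1 (x 1) * fstar j 2 (x 2))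
        = if j = j₀ then -(1/2) else 0 := by
    intro j
    have KI := SemiMixAux.key_integral u₀ u₁ u₂ (fstar j 0) (fstar j 1) (fstar j 2)
      hu₀m ⟨C₀, hC₀⟩ hu₁m ⟨C₁, hC₁⟩ hu₂m ⟨C₂, hC₂⟩ (hfint j 0) (hfint j 1) (hfint j 2)
    have e : ∫ x in cube, F x * (fstar j 0 (x 0) * fstar j 1 (x 1) * fstar j 2 (x 2))
        = ∫ x in cube,
          (u₀ (x 0) * u₁ (x 1) * u₂ (x 2) - (1/2)*(u₀ (x 0)*u₁ (x 1))
            - (1/2)*(u₀ (x 0)*u₂ (x 2)) - (1/2)*(u₁ (x 1)*u₂ (x 2)))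
          * (fstar j 0 (x 0) * fstar j 1 (x 1) * fstar j 2 (x 2)) := by
      apply integral_congr_ae
      filter_upwards with x
      rw [hFeq]
    rw [e, KI, hm₀ j, hm₁ j, hm₂ j, (hf j 0).2.2, (hf j 1).2.2, (hf j 2).2.2]
    by_cases hj : j = j₀ <;> simp [hj] <;> norm_num
  -- the tangent integrals vanish
  have htang : ∀ (j : Fin (k+1)) (c : Fin 3) (h : ℝ → ℝ),
      Integrable (fun t => h t * fstar j c t) (volume.restrict unitInt) →
      (∫ t in unitInt, h t * fstar j c t) = 0 →
      ∫ x in cube, F x * (h (x c) * (fstar j 0 (x 0) * fstar j 1 (x 1) * fstar j 2 (x 2)))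
        = 0 := by
    intro j c h hInt hZero
    fin_cases c
    · show ∫ x in cube, F x * (h (x 0) * (fstar j 0 (x 0) * fstar j 1 (x 1) * fstar j 2 (x 2))) = 0
      have hInt' : Integrable (fun t => h t * fstar j 0 t) (volume.restrict unitInt) := hInt
      have hZero' : (∫ t in unitInt, h t * fstar j 0 t) = 0 := hZero
      clear hInt hZero
      have KI := SemiMixAux.key_integral u₀ u₁ u₂ (fun t => h t * fstar j 0 t)
        (fstar j 1) (fstar j 2)
        hu₀m ⟨C₀, hC₀⟩ hu₁m ⟨C₁, hC₁⟩ hu₂m ⟨C₂, hC₂⟩ hInt' (hfint j 1) (hfint j 2)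
      have e : ∫ x in cube, F x * (h (x 0) * (fstar j 0 (x 0) * fstar j 1 (x 1) * fstar j 2 (x 2)))
          = ∫ x in cube,
            (u₀ (x 0) * u₁ (x 1) * u₂ (x 2) - (1/2)*(u₀ (x 0)*u₁ (x 1))
              - (1/2)*(u₀ (x 0)*u₂ (x 2)) - (1/2)*(u₁ (x 1)*u₂ (x 2)))
            * ((h (x 0) * fstar j 0 (x 0)) * fstar j 1 (x 1) * fstar j 2 (x 2)) := by
        apply integral_congr_ae
        filter_upwards with x
        rw [hFeq]; ring
      rw [e, KI, hZero', hm₁ j, hm₂ j, (hf j 1).2.2, (hf j 2).2.2]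
      by_cases hj : j = j₀ <;> simp [hj] <;> ring
    · show ∫ x in cube, F x * (h (x 1) * (fstar j 0 (x 0) * fstar j 1 (x 1) * fstar j 2 (x 2))) = 0
      have hInt' : Integrable (fun t => h t * fstar j 1 t) (volume.restrict unitInt) := hInt
      have hZero' : (∫ t in unitInt, h t * fstar j 1 t) = 0 := hZero
      clear hInt hZero
      have KI := SemiMixAux.key_integral u₀ u₁ u₂ (fstar j 0)
        (fun t => h t * fstar j 1 t) (fstar j 2)
        hu₀m ⟨C₀, hC₀⟩ hu₁m ⟨C₁, hC₁⟩ hu₂m ⟨C₂, hC₂⟩ (hfint j 0) hInt' (hfint j 2)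
      have e : ∫ x in cube, F x * (h (x 1) * (fstar j 0 (x 0) * fstar j 1 (x 1) * fstar j 2 (x 2)))
          = ∫ x in cube,
            (u₀ (x 0) * u₁ (x 1) * u₂ (x 2) - (1/2)*(u₀ (x 0)*u₁ (x 1))
              - (1/2)*(u₀ (x 0)*u₂ (x 2)) - (1/2)*(u₁ (x 1)*u₂ (x 2)))
            * (fstar j 0 (x 0) * (h (x 1) * fstar j 1 (x 1)) * fstar j 2 (x 2)) := by
        apply integral_congr_ae
        filter_upwards with x
        rw [hFeq]; ring
      rw [e, KI, hZero', hm₀ j, hm₂ j, (hf j 0).2.2, (hf j 2).2.2]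
      by_cases hj : j = j₀ <;> simp [hj] <;> ring
    · show ∫ x in cube, F x * (h (x 2) * (fstar j 0 (x 0) * fstar j 1 (x 1) * fstar j 2 (x 2))) = 0
      have hInt' : Integrable (fun t => h t * fstar j 2 t) (volume.restrict unitInt) := hInt
      have hZero' : (∫ t in unitInt, h t * fstar j 2 t) = 0 := hZero
      clear hInt hZero
      have KI := SemiMixAux.key_integral u₀ u₁ u₂ (fstar j 0) (fstar j 1)
        (fun t => h t * fstar j 2 t)
        hu₀m ⟨C₀, hC₀⟩ hu₁m ⟨C₁, hC₁⟩ hu₂m ⟨C₂, hC₂⟩ (hfint j 0) (hfint j 1) hInt'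
      have e : ∫ x in cube, F x * (h (x 2) * (fstar j 0 (x 0) * fstar j 1 (x 1) * fstar j 2 (x 2)))
          = ∫ x in cube,
            (u₀ (x 0) * u₁ (x 1) * u₂ (x 2) - (1/2)*(u₀ (x 0)*u₁ (x 1))
              - (1/2)*(u₀ (x 0)*u₂ (x 2)) - (1/2)*(u₁ (x 1)*u₂ (x 2)))
            * (fstar j 0 (x 0) * fstar j 1 (x 1) * (h (x 2) * fstar j 2 (x 2))) := by
        apply integral_congr_ae
        filter_upwards with x
        rw [hFeq]; ring
      rw [e, KI, hZero', hm₀ j, hm₁ j, (hf j 0).2.2, (hf j 1).2.2]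
      by_cases hj : j = j₀ <;> simp [hj] <;> ring
  -- tangent functions are integrable against the densities
  have hemfin : ∀ j c, IsFiniteMeasure (emissionMeasure (fstar j c)) := by
    intro j c
    constructor
    have h1 : emissionMeasure (fstar j c) Set.univ
        = ∫⁻ u, ENNReal.ofReal (fstar j c u) ∂(volume.restrict unitInt) := by
      simp only [emissionMeasure]
      rw [withDensity_apply _ MeasurableSet.univ, Measure.restrict_univ]
    rw [h1, ← MeasureTheory.ofReal_integral_eq_lintegral_ofReal (hfint j c)
      (Filter.Eventually.of_forall fun u => hfnn j c u)]
    exact ENNReal.ofReal_lt_top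
  have hHint : ∀ (j : Fin (k+1)) (c : Fin 3) (h : ℝ → ℝ),
      MemLp h 2 (emissionMeasure (fstar j c)) →
      Integrable (fun t => h t * fstar j c t) (volume.restrict unitInt) := by
    intro j c h hh
    haveI := hemfin j c
    have h1 : Integrable h (emissionMeasure (fstar j c)) :=
      memLp_one_iff_integrable.1 (hh.mono_exponent (by norm_num))
    have h2 : Integrable h ((volume.restrict unitInt).withDensity
        (fun u => ENNReal.ofReal (fstar j c u))) := h1
    have hfm : Measurable (fun u => ENNReal.ofReal (fstar j c u)) :=
      ENNReal.measurable_ofReal.comp (hfmeas j c)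
    rw [integrable_withDensity_iff hfm (Filter.Eventually.of_forall
        fun x => ENNReal.ofReal_lt_top)] at h2
    have h3 : (fun t => h t * (ENNReal.ofReal (fstar j c t)).toReal)
        = fun t => h t * fstar j c t := by
      funext t
      rw [ENNReal.toReal_ofReal (hfnn j c t)]
    rwa [h3] at h2
  -- F is orthogonal to the tangent set
  have horth : ∀ G ∈ tangentSet k θstar fstar, (inner ℝ FLp G : ℝ) = 0 := by
    rintro G ⟨j, c, h, hmem2, hzero, hae⟩
    rw [hinner G]
    have e1 : ∫ x, F x * G x ∂(μstar k θstar fstar)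
        = ∫ x, F x * (h (x c) * (∏ c', fstar j c' (x c')) / gmix k θstar fstar x)
            ∂(μstar k θstar fstar) := by
      apply integral_congr_ae
      filter_upwards [hae] with x hx
      rw [hx]
    rw [e1, hμint]
    have e2 : ∫ x in cube, gmix k θstar fstar x
          * (F x * (h (x c) * (∏ c', fstar j c' (x c')) / gmix k θstar fstar x))
        = ∫ x in cube, F x * (h (x c) * (fstar j 0 (x 0) * fstar j 1 (x 1) * fstar j 2 (x 2))) := by
      apply integral_congr_ae
      filter_upwards [ae_restrict_mem SemiMixAux.measurableSet_cube] with x hx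
      have hgx : gmix k θstar fstar x ≠ 0 := (hgpos x hx).ne'
      rw [Fin.prod_univ_three (fun c' => fstar j c' (x c'))]
      field_simp
    rw [e2]
    exact htang j c h (hHint j c h hmem2) hzero
  -- F is orthogonal to Pdot
  have hPdotOrth : ∀ G : Lp ℝ 2 (μstar k θstar fstar),
      G ∈ Pdot k θstar fstar → (inner ℝ FLp G : ℝ) = 0 := by
    intro G hG
    have hker : Pdot k θstar fstar ≤ LinearMap.ker (innerSL ℝ FLp).toLinearMap := by
      apply Submodule.topologicalClosure_minimal
      · rw [Submodule.span_le]
        intro G' hG'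
        rw [SetLike.mem_coe, LinearMap.mem_ker]
        exact horth G' hG'
      · exact ContinuousLinearMap.isClosed_ker (innerSL ℝ FLp)
    have := hker hG
    rw [LinearMap.mem_ker] at this
    exact this
  -- the θ-scores are in L²
  have hSmeas : ∀ i : Fin k, Measurable (Sθstar k θstar fstar i) := by
    intro i
    unfold Sθstar
    apply Measurable.div _ hgmeas
    apply Measurable.sub <;>
      exact Finset.measurable_prod _ fun c _ => (hfmeas _ c).comp (measurable_pi_apply c)
  have hSbd : ∀ (i : Fin k) (x : Fin 3 → ℝ), x ∈ cube →
      |Sθstar k θstar fstar i x| ≤ 1/θstar i.castSucc + 1/θstar (Fin.last k) := by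
    intro i x hx
    have hgx := hgpos x hx
    unfold Sθstar
    rw [abs_div, abs_of_pos hgx]
    have hAB : |∏ c, fstar i.castSucc c (x c) - ∏ c, fstar (Fin.last k) c (x c)|
        ≤ ∏ c, fstar i.castSucc c (x c) + ∏ c, fstar (Fin.last k) c (x c) := by
      have tri : ∀ s t : ℝ, |s - t| ≤ |s| + |t| := fun s t => by
        simpa [Real.norm_eq_abs] using norm_sub_le s t
      calc |∏ c, fstar i.castSucc c (x c) - ∏ c, fstar (Fin.last k) c (x c)|
          ≤ |∏ c, fstar i.castSucc c (x c)| + |∏ c, fstar (Fin.last k) c (x c)| := tri _ _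
        _ = ∏ c, fstar i.castSucc c (x c) + ∏ c, fstar (Fin.last k) c (x c) := by
            rw [abs_of_nonneg (hprodnn _ x), abs_of_nonneg (hprodnn _ x)]
    have hdiv : ∀ j : Fin (k+1),
        (∏ c, fstar j c (x c)) / gmix k θstar fstar x ≤ 1/θstar j := by
      intro j
      rw [div_le_div_iff₀ hgx (hθpos j)]
      calc (∏ c, fstar j c (x c)) * θstar j = θstar j * ∏ c, fstar j c (x c) := by ring
        _ ≤ gmix k θstar fstar x := hprodle j x
        _ = gmix k θstar fstar x * 1 := by ring
        _ ≤ 1 * gmix k θstar fstar x := by rw [mul_comm]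
    calc |∏ c, fstar i.castSucc c (x c) - ∏ c, fstar (Fin.last k) c (x c)|
          / gmix k θstar fstar x
        ≤ (∏ c, fstar i.castSucc c (x c) + ∏ c, fstar (Fin.last k) c (x c))
          / gmix k θstar fstar x := by
          exact (div_le_div_iff_of_pos_right hgx).2 hAB
      _ ≤ 1/θstar i.castSucc + 1/θstar (Fin.last k) := by
          rw [add_div]
          exact add_le_add (hdiv i.castSucc) (hdiv (Fin.last k))
  have hSmem : ∀ i : Fin k, MemLp (Sθstar k θstar fstar i) 2 (μstar k θstar fstar) := by
    intro i
    apply MemLp.of_bound (hSmeas i).aestronglyMeasurable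
      (1/θstar i.castSucc + 1/θstar (Fin.last k))
    filter_upwards [hμcube] with x hx
    simpa [Real.norm_eq_abs] using hSbd i x hx
  have hSLp : ∀ i : Fin k, SθstarLp k θstar fstar i = (hSmem i).toLp _ := by
    intro i
    simp only [SθstarLp]
    rw [dif_pos (hSmem i)]
  -- the inner product of F with the θ-scores
  have hFSθ : ∀ i : Fin k, (inner ℝ FLp (SθstarLp k θstar fstar i) : ℝ)
      = if i = i₀ then -(1/2) else 0 := by
    intro i
    rw [hSLp i, hinner]
    have e1 : ∫ x, F x * ((hSmem i).toLp _) x ∂(μstar k θstar fstar)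
        = ∫ x, F x * Sθstar k θstar fstar i x ∂(μstar k θstar fstar) := by
      apply integral_congr_ae
      filter_upwards [(hSmem i).coeFn_toLp] with x hx
      rw [hx]
    rw [e1, hμint]
    have hIA : Integrable (fun x => F x
        * (fstar i.castSucc 0 (x 0) * fstar i.castSucc 1 (x 1) * fstar i.castSucc 2 (x 2)))
        (volume.restrict cube) :=
      (SemiMixAux.cube_intble3 (hfint i.castSucc 0) (hfint i.castSucc 1) (hfint i.castSucc 2)).bdd_mul
        hFmeas.aestronglyMeasurable
        (c := C₀*C₁*C₂ + (1/2)*(C₀*C₁) + (1/2)*(C₀*C₂) + (1/2)*(C₁*C₂))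
        (Filter.Eventually.of_forall fun x => by simpa [Real.norm_eq_abs] using hFbd x)
    have hIB : Integrable (fun x => F x
        * (fstar (Fin.last k) 0 (x 0) * fstar (Fin.last k) 1 (x 1) * fstar (Fin.last k) 2 (x 2)))
        (volume.restrict cube) :=
      (SemiMixAux.cube_intble3 (hfint _ 0) (hfint _ 1) (hfint _ 2)).bdd_mul
        hFmeas.aestronglyMeasurable
        (c := C₀*C₁*C₂ + (1/2)*(C₀*C₁) + (1/2)*(C₀*C₂) + (1/2)*(C₁*C₂))
        (Filter.Eventually.of_forall fun x => by simpa [Real.norm_eq_abs] using hFbd x)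
    have e2 : ∫ x in cube, gmix k θstar fstar x * (F x * Sθstar k θstar fstar i x)
        = ∫ x in cube, (F x
            * (fstar i.castSucc 0 (x 0) * fstar i.castSucc 1 (x 1) * fstar i.castSucc 2 (x 2))
          - F x
            * (fstar (Fin.last k) 0 (x 0) * fstar (Fin.last k) 1 (x 1) * fstar (Fin.last k) 2 (x 2))) := by
      apply integral_congr_ae
      filter_upwards [ae_restrict_mem SemiMixAux.measurableSet_cube] with x hx
      have hgx : gmix k θstar fstar x ≠ 0 := (hgpos x hx).ne'
      unfold Sθstar
      rw [Fin.prod_univ_three (fun c => fstar i.castSucc c (x c)),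
        Fin.prod_univ_three (fun c => fstar (Fin.last k) c (x c))]
      field_simp
    rw [e2, integral_sub hIA hIB, hport i.castSucc, hport (Fin.last k)]
    have hlast : ¬ (Fin.last k = j₀) := by
      rw [hj₀]
      exact (Fin.castSucc_lt_last i₀).ne'
    rw [if_neg hlast, sub_zero, hj₀]
    by_cases hi : i = i₀
    · rw [if_pos (by rw [hi]), if_pos hi]
    · rw [if_neg (fun hcon => hi (Fin.castSucc_inj.1 hcon)), if_neg hi]
  -- inner products of F with the efficient scores
  have hψval : ∀ i : Fin k, (inner ℝ FLp (effScore k θstar fstar i) : ℝ)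
      = if i = i₀ then -(1/2) else 0 := by
    intro i
    simp only [effScore]
    rw [inner_sub_right, hFSθ i, hPdotOrth _ (SetLike.coe_mem _), sub_zero]
  -- Jtilde as a Gram matrix
  have hJ : ∀ i i' : Fin k, Jtilde k θstar fstar i i'
      = (inner ℝ (effScore k θstar fstar i) (effScore k θstar fstar i') : ℝ) := by
    intro i i'
    rw [MeasureTheory.L2.inner_def]
    simp only [Jtilde, effScoreFun]
    apply integral_congr_ae
    filter_upwards with x
    rw [RCLike.inner_apply, conj_trivial, mul_comm]
  -- conclude
  set Ψ : Lp ℝ 2 (μstar k θstar fstar) := ∑ i, a i • effScore k θstar fstar i with hΨdef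
  have hiΨ : ∀ i : Fin k, (inner ℝ (effScore k θstar fstar i) Ψ : ℝ) = 0 := by
    intro i
    rw [hΨdef, inner_sum]
    have e : ∀ i' : Fin k, (inner ℝ (effScore k θstar fstar i)
        (a i' • effScore k θstar fstar i') : ℝ) = Jtilde k θstar fstar i i' * a i' := by
      intro i'
      rw [real_inner_smul_right, hJ]
      ring
    rw [Finset.sum_congr rfl fun i' _ => e i']
    have := congrFun haJ i
    simpa [Matrix.mulVec, dotProduct] using this
  have hΨ0 : Ψ = 0 := by
    rw [← inner_self_eq_zero (𝕜 := ℝ)]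
    conv_lhs => rw [hΨdef]
    rw [sum_inner]
    rw [Finset.sum_congr rfl fun i _ => real_inner_smul_left (effScore k θstar fstar i) Ψ (a i)]
    rw [Finset.sum_congr rfl fun i _ => by rw [hiΨ i, mul_zero]]
    exact Finset.sum_const_zero
  have hcon : (inner ℝ FLp Ψ : ℝ) = -(1/2) * a i₀ := by
    rw [hΨdef, inner_sum]
    rw [Finset.sum_congr rfl fun i _ => real_inner_smul_right FLp (effScore k θstar fstar i) (a i)]
    rw [Finset.sum_congr rfl fun i _ => by rw [hψval i]]
    simp [Finset.sum_ite_eq', mul_comm]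
  rw [hΨ0, inner_zero_right] at hcon
  apply hai₀
  linarith [hcon]
end
end

section
/- Let 𝓜 be a set and A, B, C, R : 𝓜 → ℝ functions. If for all m, m' ∈ 𝓜, (C(m) − R(m)) − (C(m') − R(m')) ≤ A(m) + B(m'), then for every ρ > 0 and every m̂ ∈ 𝓜 satisfying C(m̂) ≤ inf_{m∈𝓜} C(m) + ρ, one has R(m̂) − B(m̂) ≤ inf_{m∈𝓜} {R(m) + A(m)} + ρ. -/
open Filter

/-- **Arlot's lemma** (Lemma 2.1 of Arlot), the deterministic step behind the
oracle inequality: if the criterion `C` estimates the risk `R` up to errors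
`A`, `B`, then any `ρ`-approximate minimizer of `C` almost minimizes `R`. -/
theorem stmt_11 {M : Type*} [Nonempty M] (A B C R : M → ℝ)
    (hC : BddBelow (Set.range C))
    (hRA : BddBelow (Set.range fun m => R m + A m))
    (hyp : ∀ m m' : M, (C m - R m) - (C m' - R m') ≤ A m + B m')
    (ρ : ℝ) (hρ : 0 < ρ)
    (mhat : M) (hmhat : C mhat ≤ (⨅ m, C m) + ρ) :
    R mhat - B mhat ≤ (⨅ m, R m + A m) + ρ := by
  have h : ∀ m, R mhat - B mhat - ρ ≤ R m + A m := by
    intro m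
    have h1 := hyp m mhat
    have h2 : C mhat ≤ C m + ρ := le_trans hmhat (by linarith [ciInf_le hC m])
    linarith
  linarith [le_ciInf h]
end

section
/- Let f_1,…,f_k be probability densities on [0,1] such that the measures f_1dx,…,f_kdx are linearly independent, and let (𝓘_M)_{M∈𝓜} be a sequence of partitions of [0,1] into intervals with nonempty interior whose mesh max_{1≤m≤M}|I_m| tends to 0 as M → ∞. For each M and each j, let f_{j;M} be the step function f_{j;M} = Σ_{m=1}^M ((∫_{I_m} f_j(u)du)/|I_m|) 1_{I_m}. Then for all sufficiently large M, the measures f_{1;M}dx,…,f_{k;M}dx are linearly independent. -/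
open MeasureTheory Filter Finset

noncomputable section
namespace Stmt15Aux
def S01 : Set ℝ := Set.Icc 0 1
lemma volume_S01 : volume S01 = 1 := by simp [S01]
def stepApprox {n : ℕ} (P : Fin n → Set ℝ) (h : ℝ → ℝ) : ℝ → ℝ :=
  fun u => ∑ m, ((∫ v in P m, h v) / (volume (P m)).toReal) * (P m).indicator 1 u
lemma step_eq_on_piece {n : ℕ} {P : Fin n → Set ℝ}
    (hdisj : Pairwise fun m m' => Disjoint (P m) (P m')) (h : ℝ → ℝ)
    {m : Fin n} {u : ℝ} (hu : u ∈ P m) :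
    stepApprox P h u = (∫ v in P m, h v) / (volume (P m)).toReal := by
  unfold stepApprox
  rw [Finset.sum_eq_single m]
  · simp [Set.indicator_of_mem hu]
  · intro m' _ hne
    have : u ∉ P m' := fun hmem => (hdisj hne.symm).ne_of_mem hu hmem rfl
    simp [Set.indicator_of_notMem this]
  · simp

lemma integrableOn_stepApprox {n : ℕ} (P : Fin n → Set ℝ)
    (hmeas : ∀ m, MeasurableSet (P m)) (h : ℝ → ℝ) {s : Set ℝ} (hs : volume s ≠ ⊤) :
    IntegrableOn (stepApprox P h) s := by
  apply integrable_finset_sum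
  intro m _
  have : (fun u => ((∫ v in P m, h v) / (volume (P m)).toReal) * (P m).indicator 1 u)
      = (P m).indicator (fun _ => (∫ v in P m, h v) / (volume (P m)).toReal) := by
    ext u; by_cases hu : u ∈ P m <;> simp [hu]
  rw [this]
  rw [integrable_indicator_iff (hmeas m)]
  apply integrableOn_const (lt_top_iff_ne_top.1 ?_)
  calc (volume.restrict s) (P m) ≤ volume s := by
        rw [Measure.restrict_apply (hmeas m)]
        exact measure_mono Set.inter_subset_right
    _ < ⊤ := lt_top_iff_ne_top.2 hs

lemma dist_le_volume {P : Set ℝ} (hP : P.OrdConnected) (hvol : volume P ≠ ⊤)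
    {u v : ℝ} (hu : u ∈ P) (hv : v ∈ P) : |u - v| ≤ (volume P).toReal := by
  wlog h : v ≤ u generalizing u v
  · rw [abs_sub_comm]; exact this hv hu (le_of_not_ge h)
  have hsub : Set.Icc v u ⊆ P := hP.out hv hu
  have h2 : volume (Set.Icc v u) ≤ volume P := measure_mono hsub
  rw [Real.volume_Icc] at h2
  have h3 := ENNReal.toReal_mono hvol h2
  rw [ENNReal.toReal_ofReal (by linarith)] at h3
  rwa [abs_of_nonneg (by linarith)]

section Partition
variable {n : ℕ} {P : Fin n → Set ℝ}
  (hmeas : ∀ m, MeasurableSet (P m))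
  (hdisj : Pairwise fun m m' => Disjoint (P m) (P m'))
  (hunion : (⋃ m, P m) = S01)

include hunion in
lemma piece_subset : ∀ m, P m ⊆ S01 := by
  intro m; rw [← hunion]; exact Set.subset_iUnion _ m

include hunion in
lemma piece_vol_ne_top : ∀ m, volume (P m) ≠ ⊤ := by
  intro m
  have : volume (P m) ≤ volume S01 := measure_mono (piece_subset hunion m)
  rw [volume_S01] at this
  exact (lt_of_le_of_lt this (by norm_num)).ne

include hmeas hdisj hunion in
lemma decomp (φ : ℝ → ℝ) (hφ : ∀ m, IntegrableOn φ (P m)) :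
    ∫ u in S01, φ u = ∑ m, ∫ u in P m, φ u := by
  rw [← hunion]
  exact integral_iUnion_fintype hmeas hdisj hφ

include hmeas hdisj hunion in
lemma sum_piece_vol : ∑ m, (volume (P m)).toReal = 1 := by
  have h1 : ∀ m, IntegrableOn (fun _ => (1:ℝ)) (P m) := by
    intro m
    exact integrableOn_const (piece_vol_ne_top hunion m)
  have := decomp hmeas hdisj hunion (fun _ => (1:ℝ)) h1
  simp only [setIntegral_const, smul_eq_mul, mul_one] at this
  simp only [measureReal_def] at this
  rw [← this, volume_S01]
  simp

include hmeas hdisj hunion in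
lemma contraction (h : ℝ → ℝ) (hpos : ∀ m, volume (P m) ≠ 0) (hhi : IntegrableOn h S01) :
    ∫ u in S01, |stepApprox P h u| ≤ ∫ u in S01, |h u| := by
  have hS1 : volume S01 ≠ ⊤ := by rw [volume_S01]; norm_num
  have hvm : ∀ m, 0 < (volume (P m)).toReal := fun m =>
    ENNReal.toReal_pos (hpos m) (piece_vol_ne_top hunion m)
  have hhm : ∀ m, IntegrableOn h (P m) := fun m => hhi.mono_set (piece_subset hunion m)
  have hstepm : ∀ m, IntegrableOn (fun u => |stepApprox P h u|) (P m) := fun m =>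
    ((integrableOn_stepApprox P hmeas h hS1).mono_set (piece_subset hunion m)).abs
  rw [decomp hmeas hdisj hunion _ hstepm, decomp hmeas hdisj hunion _ (fun m => (hhm m).abs)]
  apply Finset.sum_le_sum
  intro m _
  have hcongr : ∫ u in P m, |stepApprox P h u|
      = ∫ _ in P m, |(∫ v in P m, h v) / (volume (P m)).toReal| := by
    apply setIntegral_congr_fun (hmeas m)
    intro u hu
    simp only [step_eq_on_piece hdisj h hu]
  rw [hcongr, setIntegral_const, measureReal_def, smul_eq_mul, abs_div,
    abs_of_nonneg (hvm m).le, mul_div_cancel₀ _ (hvm m).ne']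
  simpa using norm_integral_le_integral_norm (μ := volume.restrict (P m)) h

include hmeas hdisj hunion in
lemma cont_est (g : ℝ → ℝ) (hord : ∀ m, (P m).OrdConnected)
    (hpos : ∀ m, volume (P m) ≠ 0) (hgi : IntegrableOn g S01)
    {ε δ : ℝ} (hε : 0 ≤ ε)
    (hmod : ∀ u ∈ S01, ∀ v ∈ S01, |u - v| ≤ δ → |g u - g v| ≤ ε)
    (hmesh : ∀ m, (volume (P m)).toReal ≤ δ) :
    ∫ u in S01, |stepApprox P g u - g u| ≤ ε := by
  have hS1 : volume S01 ≠ ⊤ := by rw [volume_S01]; norm_num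
  have hvm : ∀ m, 0 < (volume (P m)).toReal := fun m =>
    ENNReal.toReal_pos (hpos m) (piece_vol_ne_top hunion m)
  have hgm : ∀ m, IntegrableOn g (P m) := fun m => hgi.mono_set (piece_subset hunion m)
  have hφ : ∀ m, IntegrableOn (fun u => |stepApprox P g u - g u|) (P m) := fun m =>
    (IntegrableOn.mono_set (Integrable.sub (integrableOn_stepApprox P hmeas g hS1) hgi)
      (piece_subset hunion m)).abs
  rw [decomp hmeas hdisj hunion _ hφ]
  -- pointwise bound on each piece
  have key : ∀ m : Fin n, ∀ u ∈ P m, |stepApprox P g u - g u| ≤ ε := by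
    intro m u hu
    rw [step_eq_on_piece hdisj g hu]
    have hidentity : (∫ v in P m, g v) - g u * (volume (P m)).toReal
        = ∫ v in P m, (g v - g u) := by
      rw [integral_sub (hgm m) (integrableOn_const
        (piece_vol_ne_top hunion m)), setIntegral_const, measureReal_def]
      simp only [smul_eq_mul]
      ring
    have hbound : |∫ v in P m, (g v - g u)| ≤ ε * (volume (P m)).toReal := by
      have := norm_setIntegral_le_of_norm_le_const_ae' (μ := volume)
        (lt_top_iff_ne_top.2 (piece_vol_ne_top hunion m))
        (C := ε) (f := fun v => g v - g u) ?_
      · simpa [measureReal_def] using this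
      · apply Filter.Eventually.of_forall
        intro v hv
        simp only [Real.norm_eq_abs]
        exact hmod v (piece_subset hunion m hv) u (piece_subset hunion m hu)
          (le_trans (dist_le_volume (hord m) (piece_vol_ne_top hunion m) hv hu) (hmesh m))
    have heq : (∫ v in P m, g v) / (volume (P m)).toReal - g u
        = ((∫ v in P m, g v) - g u * (volume (P m)).toReal) / (volume (P m)).toReal := by
      rw [sub_div, mul_div_cancel_right₀ _ (hvm m).ne']
    rw [heq, hidentity, abs_div, abs_of_nonneg (hvm m).le, div_le_iff₀ (hvm m)]
    exact hbound
  calc ∑ m, ∫ u in P m, |stepApprox P g u - g u|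
      ≤ ∑ m, ε * (volume (P m)).toReal := by
        apply Finset.sum_le_sum
        intro m _
        calc ∫ u in P m, |stepApprox P g u - g u| ≤ ∫ _ in P m, ε := by
              apply setIntegral_mono_on (hφ m) (integrableOn_const
                (piece_vol_ne_top hunion m)) (hmeas m)
              exact key m
          _ = ε * (volume (P m)).toReal := by rw [setIntegral_const, measureReal_def, smul_eq_mul, mul_comm]
    _ = ε := by rw [← Finset.mul_sum, sum_piece_vol hmeas hdisj hunion, mul_one]


lemma stepApprox_sub {n : ℕ} (P : Fin n → Set ℝ) (f g : ℝ → ℝ)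
    (hf : ∀ m, IntegrableOn f (P m)) (hg : ∀ m, IntegrableOn g (P m)) (u : ℝ) :
    stepApprox P (fun v => f v - g v) u = stepApprox P f u - stepApprox P g u := by
  unfold stepApprox
  rw [← Finset.sum_sub_distrib]
  apply Finset.sum_congr rfl
  intro m _
  rw [integral_sub (hf m) (hg m)]
  ring

lemma stepApprox_combo {n k : ℕ} (P : Fin n → Set ℝ) (c : Fin k → ℝ) (h : Fin k → ℝ → ℝ)
    (hint : ∀ j m, IntegrableOn (h j) (P m)) (u : ℝ) :
    stepApprox P (fun v => ∑ j, c j * h j v) u = ∑ j, c j * stepApprox P (h j) u := by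
  unfold stepApprox
  have hterm : ∀ m : Fin n, (∫ v in P m, (fun v => ∑ j, c j * h j v) v)
        / (volume (P m)).toReal * (P m).indicator 1 u
      = ∑ j, c j * ((∫ v in P m, h j v) / (volume (P m)).toReal * (P m).indicator 1 u) := by
    intro m
    simp only
    rw [integral_finset_sum _ (fun j _ => ((hint j m).const_mul (c j)))]
    simp only [integral_const_mul]
    rw [Finset.sum_div, Finset.sum_mul]
    apply Finset.sum_congr rfl
    intro j _
    ring
  simp only [hterm]
  rw [Finset.sum_comm]
  apply Finset.sum_congr rfl
  intro j _
  rw [Finset.mul_sum]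

include hmeas hdisj hunion in
lemma step_close (f g : ℝ → ℝ) (hord : ∀ m, (P m).OrdConnected)
    (hpos : ∀ m, volume (P m) ≠ 0)
    (hfi : IntegrableOn f S01) (hgi : IntegrableOn g S01)
    {ε δ : ℝ} (hε : 0 ≤ ε)
    (hmod : ∀ u ∈ S01, ∀ v ∈ S01, |u - v| ≤ δ → |g u - g v| ≤ ε)
    (hmesh : ∀ m, (volume (P m)).toReal ≤ δ) :
    ∫ u in S01, |stepApprox P f u - f u| ≤ 2 * (∫ u in S01, |f u - g u|) + ε := by
  have hS1 : volume S01 ≠ ⊤ := by rw [volume_S01]; norm_num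
  have hfm : ∀ m, IntegrableOn f (P m) := fun m => hfi.mono_set (piece_subset hunion m)
  have hgm : ∀ m, IntegrableOn g (P m) := fun m => hgi.mono_set (piece_subset hunion m)
  have hA : IntegrableOn (fun u => |stepApprox P (fun v => f v - g v) u|) S01 :=
    (integrableOn_stepApprox P hmeas _ hS1).abs
  have hB : IntegrableOn (fun u => |stepApprox P g u - g u|) S01 :=
    (Integrable.sub (integrableOn_stepApprox P hmeas g hS1) hgi).abs
  have hC : IntegrableOn (fun u => |g u - f u|) S01 := (Integrable.sub hgi hfi).abs
  have hAB : IntegrableOn (fun u => |stepApprox P (fun v => f v - g v) u|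
      + |stepApprox P g u - g u|) S01 := hA.add hB
  have hABC : IntegrableOn (fun u => |stepApprox P (fun v => f v - g v) u|
      + |stepApprox P g u - g u| + |g u - f u|) S01 := hAB.add hC
  have hpt : ∀ u, |stepApprox P f u - f u| ≤ |stepApprox P (fun v => f v - g v) u|
      + |stepApprox P g u - g u| + |g u - f u| := by
    intro u
    have : stepApprox P f u - f u = stepApprox P (fun v => f v - g v) u
        + (stepApprox P g u - g u) + (g u - f u) := by
      rw [stepApprox_sub P f g hfm hgm]; ring
    rw [this]
    exact (abs_add_le _ _).trans (add_le_add_left (abs_add_le _ _) _)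
  calc ∫ u in S01, |stepApprox P f u - f u|
      ≤ ∫ u in S01, (|stepApprox P (fun v => f v - g v) u|
          + |stepApprox P g u - g u| + |g u - f u|) := by
        apply integral_mono_of_nonneg (Filter.Eventually.of_forall fun u => abs_nonneg _)
          hABC (Filter.Eventually.of_forall hpt)
    _ = (∫ u in S01, |stepApprox P (fun v => f v - g v) u|)
          + (∫ u in S01, |stepApprox P g u - g u|) + ∫ u in S01, |g u - f u| := by
        rw [integral_add hAB hC, integral_add hA hB]
    _ ≤ (∫ u in S01, |f u - g u|) + ε + ∫ u in S01, |f u - g u| := by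
        gcongr ?_ + ?_ + ?_
        · exact contraction hmeas hdisj hunion _ hpos (Integrable.sub hfi hgi)
        · exact cont_est hmeas hdisj hunion g hord hpos hgi hε hmod hmesh
        · apply le_of_eq
          apply integral_congr_ae
          apply Filter.Eventually.of_forall
          intro u
          exact abs_sub_comm _ _
    _ = 2 * (∫ u in S01, |f u - g u|) + ε := by ring

end Partition

lemma exists_cont_approx (f : ℝ → ℝ) (hfi : IntegrableOn f S01) {ε : ℝ} (hε : 0 < ε) :
    ∃ g : ℝ → ℝ, Continuous g ∧ IntegrableOn g S01 ∧ ∫ u in S01, |f u - g u| ≤ ε := by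
  have hSmeas : MeasurableSet S01 := measurableSet_Icc
  have hF : Integrable (S01.indicator f) volume := hfi.integrable_indicator hSmeas
  obtain ⟨g, -, hg, gcont, gint⟩ := hF.exists_hasCompactSupport_integral_sub_le hε
  refine ⟨g, gcont, gint.integrableOn, ?_⟩
  calc ∫ u in S01, |f u - g u| = ∫ u in S01, |S01.indicator f u - g u| := by
        apply setIntegral_congr_fun hSmeas
        intro u hu
        simp [Set.indicator_of_mem hu]
    _ ≤ ∫ u, |S01.indicator f u - g u| := by
        apply setIntegral_le_integral ((hF.sub gint).abs)
        exact Filter.Eventually.of_forall fun u => abs_nonneg _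
    _ ≤ ε := by simpa [Real.norm_eq_abs] using hg

lemma exists_modulus (g : ℝ → ℝ) (hg : Continuous g) {ε : ℝ} (hε : 0 < ε) :
    ∃ δ > 0, ∀ u ∈ S01, ∀ v ∈ S01, |u - v| ≤ δ → |g u - g v| ≤ ε := by
  have huc := (isCompact_Icc (a := (0:ℝ)) (b := 1)).uniformContinuousOn_of_continuous
    hg.continuousOn
  rw [Metric.uniformContinuousOn_iff_le] at huc
  obtain ⟨δ, hδ, H⟩ := huc ε hε
  refine ⟨δ, hδ, fun u hu v hv huv => ?_⟩
  have := H u hu v hv (by simpa [Real.dist_eq] using huv)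
  simpa [Real.dist_eq] using this


/-- Triangle inequality for set integrals of absolute values of sums. -/
lemma int_abs_sum_le {n : ℕ} (c : Fin n → ℝ) (h : Fin n → ℝ → ℝ) {s : Set ℝ}
    (hint : ∀ j, IntegrableOn (h j) s) :
    ∫ u in s, |∑ j, c j * h j u| ≤ ∑ j, |c j| * ∫ u in s, |h j u| := by
  have hRi : Integrable (fun u => ∑ j, |c j| * |h j u|) (volume.restrict s) := by
    apply integrable_finset_sum
    intro j _
    exact ((hint j).abs.const_mul _)
  calc ∫ u in s, |∑ j, c j * h j u| ≤ ∫ u in s, ∑ j, |c j| * |h j u| := by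
        apply integral_mono_of_nonneg (Filter.Eventually.of_forall fun u => abs_nonneg _) hRi
        apply Filter.Eventually.of_forall
        intro u
        calc |∑ j, c j * h j u| ≤ ∑ j, |c j * h j u| := Finset.abs_sum_le_sum_abs _ _
          _ = ∑ j, |c j| * |h j u| := by simp [abs_mul]
    _ = ∑ j, |c j| * ∫ u in s, |h j u| := by
        rw [integral_finset_sum _ fun j _ => ((hint j).abs.const_mul _)]
        simp [integral_const_mul]

lemma int_abs_tri {a b : ℝ → ℝ} (ha : IntegrableOn a S01) (hb : IntegrableOn b S01) :
    ∫ u in S01, |a u| ≤ (∫ u in S01, |b u|) + ∫ u in S01, |a u - b u| := by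
  have hd : IntegrableOn (fun u => |a u - b u|) S01 := (Integrable.sub ha hb).abs
  have hbabs : IntegrableOn (fun u => |b u|) S01 := hb.abs
  have hsum : IntegrableOn (fun u => |b u| + |a u - b u|) S01 := hbabs.add hd
  calc ∫ u in S01, |a u| ≤ ∫ u in S01, (|b u| + |a u - b u|) := by
        apply integral_mono ha.abs hsum
        intro u
        calc |a u| = |b u + (a u - b u)| := by ring_nf
          _ ≤ |b u| + |a u - b u| := abs_add_le _ _
    _ = (∫ u in S01, |b u|) + ∫ u in S01, |a u - b u| := integral_add hbabs hd

lemma exists_pos_min (k : ℕ) (hk : 1 ≤ k) (f : Fin k → ℝ → ℝ)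
    (hfi : ∀ j, IntegrableOn (f j) S01)
    (hnorm : ∀ j, ∫ u in S01, |f j u| = 1)
    (hindep : ∀ α : Fin k → ℝ,
      (∀ᵐ u ∂(volume.restrict S01), ∑ j, α j * f j u = 0) → α = 0) :
    ∃ c₀ > 0, ∀ α : Fin k → ℝ, ‖α‖ = 1 → c₀ ≤ ∫ u in S01, |∑ j, α j * f j u| := by
  haveI : Nonempty (Fin k) := Fin.pos_iff_nonempty.mp hk
  set N : (Fin k → ℝ) → ℝ := fun α => ∫ u in S01, |∑ j, α j * f j u| with hN
  have hgi : ∀ α : Fin k → ℝ, IntegrableOn (fun u => ∑ j, α j * f j u) S01 := fun α =>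
    integrable_finset_sum _ fun j _ => (hfi j).const_mul _
  -- Lipschitz bound
  have hlip1 : ∀ x y : Fin k → ℝ, N x - N y ≤ ∑ j, |x j - y j| := by
    intro x y
    have hdiff : ∀ u, (∑ j, x j * f j u) - (∑ j, y j * f j u) = ∑ j, (x j - y j) * f j u := by
      intro u
      rw [← Finset.sum_sub_distrib]
      apply Finset.sum_congr rfl
      intro j _
      ring
    have h1 : N x ≤ N y + ∫ u in S01, |∑ j, (x j - y j) * f j u| := by
      have := int_abs_tri (hgi x) (hgi y)
      calc N x ≤ (∫ u in S01, |∑ j, y j * f j u|)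
            + ∫ u in S01, |(∑ j, x j * f j u) - (∑ j, y j * f j u)| := this
        _ = N y + ∫ u in S01, |∑ j, (x j - y j) * f j u| := by
            congr 1
            apply integral_congr_ae
            apply Filter.Eventually.of_forall
            intro u
            simp only [hdiff]
      
    have h2 : ∫ u in S01, |∑ j, (x j - y j) * f j u| ≤ ∑ j, |x j - y j| := by
      calc ∫ u in S01, |∑ j, (x j - y j) * f j u|
          ≤ ∑ j, |x j - y j| * ∫ u in S01, |f j u| := int_abs_sum_le _ _ (fun j => hfi j)
        _ = ∑ j, |x j - y j| := by
            apply Finset.sum_congr rfl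
            intro j _
            rw [hnorm j, mul_one]
    linarith
  have hlipschitz : LipschitzWith (k : NNReal) N := by
    apply LipschitzWith.of_dist_le_mul
    intro x y
    rw [Real.dist_eq, dist_eq_norm, NNReal.coe_natCast]
    rw [abs_sub_le_iff]
    have hbd : ∀ x y : Fin k → ℝ, ∑ j, |x j - y j| ≤ (k : ℝ) * ‖x - y‖ := by
      intro x y
      calc ∑ j, |x j - y j| ≤ ∑ _j : Fin k, ‖x - y‖ := by
            apply Finset.sum_le_sum
            intro j _
            have := norm_le_pi_norm (x - y) j
            simpa [Real.norm_eq_abs] using this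
        _ = (k : ℝ) * ‖x - y‖ := by simp [Finset.sum_const, mul_comm]
    constructor
    · exact (hlip1 x y).trans (hbd x y)
    · refine (hlip1 y x).trans ?_
      have := hbd y x
      rwa [norm_sub_rev] at this
  -- compactness
  obtain ⟨α₀, hα₀mem, hmin⟩ := (isCompact_sphere (0 : Fin k → ℝ) 1).exists_isMinOn
    (NormedSpace.sphere_nonempty.mpr zero_le_one) hlipschitz.continuous.continuousOn
  have hα₀ : ‖α₀‖ = 1 := by simpa using hα₀mem
  refine ⟨N α₀, ?_, ?_⟩
  · rcases lt_or_eq_of_le (integral_nonneg (fun u => abs_nonneg _) : 0 ≤ N α₀) with h | h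
    · exact h
    · exfalso
      have hzero : (fun u => |∑ j, α₀ j * f j u|) =ᵐ[volume.restrict S01] 0 := by
        rw [← integral_eq_zero_iff_of_nonneg (fun u => abs_nonneg _) (hgi α₀).abs]
        exact h.symm
      have : (∀ᵐ u ∂(volume.restrict S01), ∑ j, α₀ j * f j u = 0) := by
        filter_upwards [hzero] with u hu
        simpa using hu
      have := hindep α₀ this
      rw [this] at hα₀
      simp at hα₀
  · intro α hα
    exact hmin (by simpa using hα)

end Stmt15Aux


open Stmt15Aux

/-- The first step of the proof of Proposition 1 of the paper: if the
probability densities `f_1,…,f_k` on `[0,1]` are linearly independent (as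
measures) and `(𝓘_M)` is a sequence of interval partitions of `[0,1]` with
mesh tending to `0`, then for all sufficiently large `M` the histogram
approximations `f_{1;M},…,f_{k;M}` are also linearly independent. -/
theorem stmt_15 (k : ℕ) (hk : 1 ≤ k) (f : Fin k → ℝ → ℝ)
    -- `f_1,…,f_k` are probability densities on `[0,1]`
    (hf : ∀ j, Measurable (f j) ∧ (∀ u, 0 ≤ f j u) ∧
      ∫ u in Set.Icc (0:ℝ) 1, f j u = 1)
    -- linear independence of the measures `f_j dx`
    (hindep : ∀ α : Fin k → ℝ,
      (∀ᵐ u ∂(volume.restrict (Set.Icc (0:ℝ) 1)), ∑ j, α j * f j u = 0) → α = 0)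
    -- the partitions, made of intervals with nonempty interior
    (I : (M : ℕ) → Fin (M+1) → Set ℝ)
    (hpart : ∀ M, (∀ m, MeasurableSet (I M m)) ∧
      (Pairwise fun m m' => Disjoint (I M m) (I M m')) ∧
      (⋃ m, I M m) = Set.Icc (0:ℝ) 1)
    (hint : ∀ M m, (I M m).OrdConnected ∧ (interior (I M m)).Nonempty)
    -- the mesh tends to `0`
    (hmesh : ∀ ε > 0, ∃ M₀, ∀ M ≥ M₀, ∀ m, (volume (I M m)).toReal < ε) :
    ∃ M₀, ∀ M ≥ M₀, ∀ α : Fin k → ℝ,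
      (∀ᵐ u ∂(volume.restrict (Set.Icc (0:ℝ) 1)),
        ∑ j, α j * (∑ m, ((∫ v in I M m, f j v) / (volume (I M m)).toReal)
          * (I M m).indicator 1 u) = 0) → α = 0 := by
  classical
  have hS01 : Set.Icc (0:ℝ) 1 = S01 := rfl
  -- integrability of the densities
  have hfi : ∀ j, IntegrableOn (f j) S01 := by
    intro j
    by_contra h
    have h0 : ∫ u in S01, f j u = 0 := integral_undef h
    rw [← hS01] at h0
    rw [(hf j).2.2] at h0
    exact one_ne_zero h0
  have hnorm : ∀ j, ∫ u in S01, |f j u| = 1 := by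
    intro j
    have : ∫ u in S01, |f j u| = ∫ u in S01, f j u := by
      apply integral_congr_ae
      exact Filter.Eventually.of_forall fun u => abs_of_nonneg ((hf j).2.1 u)
    rw [this, ← hS01, (hf j).2.2]
  obtain ⟨c₀, hc₀, hmin⟩ := exists_pos_min k hk f hfi hnorm hindep
  have hkpos : (0:ℝ) < k := by exact_mod_cast hk
  set ε := c₀ / (2 * k) with hεdef
  have hεpos : 0 < ε := by positivity
  -- per-density convergence of the histogram approximation
  have conv : ∀ j : Fin k, ∃ M₀, ∀ M ≥ M₀,
      ∫ u in S01, |stepApprox (I M) (f j) u - f j u| ≤ ε := by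
    intro j
    obtain ⟨g, gcont, gint, hfg⟩ := exists_cont_approx (f j) (hfi j)
      (show (0:ℝ) < ε/4 by positivity)
    obtain ⟨δ, hδ, hmod⟩ := exists_modulus g gcont (show (0:ℝ) < ε/2 by positivity)
    obtain ⟨M₀, hM₀⟩ := hmesh δ hδ
    refine ⟨M₀, fun M hM => ?_⟩
    have hposM : ∀ m, volume (I M m) ≠ 0 := by
      intro m
      have h1 : 0 < volume (interior (I M m)) :=
        (isOpen_interior).measure_pos volume (hint M m).2
      exact (lt_of_lt_of_le h1 (measure_mono interior_subset)).ne'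
    have hstep := step_close (hpart M).1 (hpart M).2.1 (hpart M).2.2 (f j) g
      (fun m => (hint M m).1) hposM (hfi j) gint (le_of_lt (show (0:ℝ) < ε/2 by positivity))
      hmod (fun m => (hM₀ M hM m).le)
    linarith
  choose M₀s hM₀s using conv
  refine ⟨Finset.univ.sup M₀s, fun M hM α hα => ?_⟩
  by_contra hα0
  have hnα : ‖α‖ ≠ 0 := by simpa using hα0
  set β : Fin k → ℝ := ‖α‖⁻¹ • α with hβ
  have hβnorm : ‖β‖ = 1 := by
    rw [hβ, norm_smul, norm_inv, norm_norm, inv_mul_cancel₀ hnα]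
  -- partition facts for this M
  have hS1 : volume S01 ≠ ⊤ := by rw [volume_S01]; norm_num
  have hintm : ∀ (j : Fin k) m, IntegrableOn (f j) (I M m) := fun j m =>
    (hfi j).mono_set (piece_subset (hpart M).2.2 m)
  -- the β-combination of histograms vanishes a.e.
  set gβ : ℝ → ℝ := fun v => ∑ j, β j * f j v with hgβ
  have hgβi : IntegrableOn gβ S01 :=
    integrable_finset_sum _ fun j _ => (hfi j).const_mul _
  have hstepβ0 : ∀ᵐ u ∂(volume.restrict S01), stepApprox (I M) gβ u = 0 := by
    rw [← hS01]
    filter_upwards [hα] with u hu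
    rw [hgβ, stepApprox_combo _ _ _ hintm]
    have hexp : ∀ j : Fin k, stepApprox (I M) (f j) u
        = ∑ m, ((∫ v in I M m, f j v) / (volume (I M m)).toReal)
          * (I M m).indicator 1 u := fun j => rfl
    calc ∑ j, β j * stepApprox (I M) (f j) u
        = ‖α‖⁻¹ * ∑ j, α j * stepApprox (I M) (f j) u := by
          rw [Finset.mul_sum]
          apply Finset.sum_congr rfl
          intro j _
          rw [hβ]
          simp [mul_assoc]
      _ = 0 := by
          simp only [hexp]
          rw [hu, mul_zero]
  have hstepβi : IntegrableOn (stepApprox (I M) gβ) S01 :=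
    integrableOn_stepApprox (I M) (hpart M).1 gβ hS1
  have hzero : ∫ u in S01, |stepApprox (I M) gβ u| = 0 := by
    apply integral_eq_zero_of_ae
    filter_upwards [hstepβ0] with u hu
    simp [hu]
  -- the error term
  have herr : ∫ u in S01, |gβ u - stepApprox (I M) gβ u| ≤ c₀ / 2 := by
    have hptw : ∀ u, gβ u - stepApprox (I M) gβ u
        = ∑ j, β j * (f j u - stepApprox (I M) (f j) u) := by
      intro u
      rw [hgβ, stepApprox_combo _ _ _ hintm, ← Finset.sum_sub_distrib]
      apply Finset.sum_congr rfl
      intro j _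
      ring
    have h1 : ∫ u in S01, |gβ u - stepApprox (I M) gβ u|
        = ∫ u in S01, |∑ j, β j * (f j u - stepApprox (I M) (f j) u)| := by
      apply integral_congr_ae
      exact Filter.Eventually.of_forall fun u => by simp only [hptw]
    have hji : ∀ j : Fin k, IntegrableOn (fun u => f j u - stepApprox (I M) (f j) u) S01 :=
      fun j => Integrable.sub (hfi j) (integrableOn_stepApprox (I M) (hpart M).1 (f j) hS1)
    have h2 := int_abs_sum_le β (fun j u => f j u - stepApprox (I M) (f j) u) hji
    have h3 : ∑ j, |β j| * ∫ u in S01, |f j u - stepApprox (I M) (f j) u|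
        ≤ ∑ _j : Fin k, (1:ℝ) * ε := by
      apply Finset.sum_le_sum
      intro j _
      apply mul_le_mul
      · calc |β j| ≤ ‖β‖ := by
              simpa [Real.norm_eq_abs] using norm_le_pi_norm β j
          _ = 1 := hβnorm
      · have hMj : M ≥ M₀s j := le_trans (Finset.le_sup (Finset.mem_univ j)) hM
        have := hM₀s j M hMj
        calc ∫ u in S01, |f j u - stepApprox (I M) (f j) u|
            = ∫ u in S01, |stepApprox (I M) (f j) u - f j u| := by
              apply integral_congr_ae
              exact Filter.Eventually.of_forall fun u => abs_sub_comm _ _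
          _ ≤ ε := this
      · exact integral_nonneg fun u => abs_nonneg _
      · norm_num
    have h4 : ∑ _j : Fin k, (1:ℝ) * ε = c₀ / 2 := by
      simp only [one_mul, Finset.sum_const, Finset.card_univ, Fintype.card_fin, nsmul_eq_mul]
      rw [hεdef]
      field_simp
    rw [h1]
    linarith
  -- conclude
  have h1 : c₀ ≤ ∫ u in S01, |gβ u| := hmin β hβnorm
  have h2 : ∫ u in S01, |gβ u| ≤ (∫ u in S01, |stepApprox (I M) gβ u|)
      + ∫ u in S01, |gβ u - stepApprox (I M) gβ u| := int_abs_tri hgβi hstepβi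
  rw [hzero] at h2
  linarith
end
end
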